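/- Let n ≥ 2 and consider the real Lie algebra sl(n,ℝ) of traceless real n×n matrices with bracket the matrix commutator. For every ν with 1 ≤ ν ≤ n−1, the matrix e_ν = E(ν,ν) − E(ν+1,ν+1) is an essential element of sl(n,ℝ). -/

import Mathlib

open Matrix

attribute [local instance 100] LieRing.ofAssociativeRing

/-- The linear span of all brackets `⁅a, b⁆` with `a ∈ A`, `b ∈ B`. -/
def bracketSpan {L : Type*} [LieRing L] [LieAlgebra ℝ L] (A B : Submodule ℝ L) :
    Submodule ℝ L :=
  Submodule.span ℝ {x | ∃ a ∈ A, ∃ b ∈ B, x = ⁅a, b⁆}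

/-- `m` is essential: `ad m` is diagonalizable over `ℝ` and
`ℝ·m + [m,g] + [[m,g],[m,g]] = g`. -/
def Essential {L : Type*} [LieRing L] [LieAlgebra ℝ L] (m : L) : Prop :=
  (⨆ c : ℝ, (LieAlgebra.ad ℝ L m).eigenspace c) = ⊤ ∧
    Submodule.span ℝ {m} ⊔ LinearMap.range (LieAlgebra.ad ℝ L m) ⊔
      bracketSpan (LinearMap.range (LieAlgebra.ad ℝ L m))
        (LinearMap.range (LieAlgebra.ad ℝ L m)) = ⊤

/-- `sl(n,ℝ)`: the real Lie algebra of traceless real `n × n` matrices. -/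
def slLie (n : ℕ) : LieSubalgebra ℝ (Matrix (Fin n) (Fin n) ℝ) where
  carrier := {X | X.trace = 0}
  zero_mem' := by simp
  add_mem' := by
    intro a b ha hb
    simp only [Set.mem_setOf_eq] at ha hb ⊢
    rw [trace_add, ha, hb, add_zero]
  smul_mem' := by
    intro r X hX
    simp only [Set.mem_setOf_eq] at hX ⊢
    rw [trace_smul, hX, smul_zero]
  lie_mem' := by
    intro X Y _ _
    simp only [Set.mem_setOf_eq]
    rw [Ring.lie_def, trace_sub, trace_mul_comm, sub_self]

namespace SlEssAux

variable {n : ℕ}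

/-- The diagonal weight vector of `e_ν`. -/
def av (ν ν' : Fin n) : Fin n → ℝ :=
  fun k => if k = ν then 1 else if k = ν' then -1 else 0

/-- The basic matrices: `E_ij` off the diagonal, `E_ii - E_νν` on the diagonal. -/
def cE (ν i j : Fin n) : Matrix (Fin n) (Fin n) ℝ :=
  single i j 1 - if i = j then single ν ν 1 else 0

lemma cE_trace (ν i j : Fin n) : (cE ν i j).trace = 0 := by
  unfold cE
  rcases eq_or_ne i j with rfl | h
  · simp [trace_single_eq_same]
  · rw [if_neg h, sub_zero, trace_single_eq_of_ne (i := i) (j := j) (c := (1:ℝ)) h]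

/-- The basic elements of `sl(n)`. -/
def cL (ν i j : Fin n) : slLie n := ⟨cE ν i j, cE_trace ν i j⟩

lemma cE_apply (ν i j k l : Fin n) :
    cE ν i j k l =
      (if i = k ∧ j = l then (1:ℝ) else 0) - (if i = j ∧ ν = k ∧ ν = l then 1 else 0) := by
  rcases eq_or_ne i j with rfl | h
  · simp [cE, single]
  · simp [cE, single, h]

lemma m_eq_diagonal (ν ν' : Fin n) (hne : ν ≠ ν') :
    single ν ν (1:ℝ) - single ν' ν' (1:ℝ) = diagonal (av ν ν') := by
  ext k l
  simp only [Matrix.sub_apply, single, of_apply, diagonal_apply, av]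
  rcases eq_or_ne k l with rfl | hkl
  · rcases eq_or_ne k ν with rfl | h1
    · simp [hne.symm, (Ne.symm hne)]
    · rcases eq_or_ne k ν' with rfl | h2
      · simp [h1, Ne.symm h1]
      · simp [h1, h2, Ne.symm h1, Ne.symm h2]
  · have h1 : ¬(ν = k ∧ ν = l) := by rintro ⟨rfl, rfl⟩; exact hkl rfl
    have h2 : ¬(ν' = k ∧ ν' = l) := by rintro ⟨rfl, rfl⟩; exact hkl rfl
    simp [h1, h2, hkl]

variable (ν ν' : Fin n) (m : slLie n)

lemma ad_apply_entry (hm : (m : Matrix (Fin n) (Fin n) ℝ) = diagonal (av ν ν')) (x : slLie n) (k l : Fin n) :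
    ((LieAlgebra.ad ℝ (slLie n) m x : slLie n) : Matrix (Fin n) (Fin n) ℝ) k l =
      (av ν ν' k - av ν ν' l) * (x : Matrix (Fin n) (Fin n) ℝ) k l := by
  rw [LieAlgebra.ad_apply, LieSubalgebra.coe_bracket, Ring.lie_def, hm]
  simp [Matrix.sub_apply, diagonal_mul, mul_diagonal, sub_mul, mul_comm]

lemma ad_cL (hm : (m : Matrix (Fin n) (Fin n) ℝ) = diagonal (av ν ν')) (i j : Fin n) :
    LieAlgebra.ad ℝ (slLie n) m (cL ν i j) = (av ν ν' i - av ν ν' j) • cL ν i j := by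
  apply Subtype.ext
  ext k l
  rw [ad_apply_entry ν ν' m hm]
  show (av ν ν' k - av ν ν' l) * cE ν i j k l = ((av ν ν' i - av ν ν' j) • cE ν i j) k l
  rw [Matrix.smul_apply, smul_eq_mul]
  rcases eq_or_ne i j with rfl | hij
  · rcases eq_or_ne k l with rfl | hkl
    · ring
    · have : cE ν i i k l = 0 := by
        rw [cE_apply]
        have h1 : ¬(i = k ∧ i = l) := by rintro ⟨rfl, rfl⟩; exact hkl rfl
        have h2 : ¬(ν = k ∧ ν = l) := by rintro ⟨rfl, rfl⟩; exact hkl rfl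
        simp [h1, h2]
      rw [this, mul_zero, mul_zero]
  · rcases eq_or_ne i k with rfl | hik
    · rcases eq_or_ne j l with rfl | hjl
      · rfl
      · have : cE ν i j i l = 0 := by
          rw [cE_apply]; simp [hjl, hij]
        rw [this, mul_zero, mul_zero]
    · have : cE ν i j k l = 0 := by
        rw [cE_apply]; simp [hik, hij]
      rw [this, mul_zero, mul_zero]

lemma cL_mem_range (hm : (m : Matrix (Fin n) (Fin n) ℝ) = diagonal (av ν ν'))
    (i j : Fin n) (h : av ν ν' i - av ν ν' j ≠ 0) :
    cL ν i j ∈ LinearMap.range (LieAlgebra.ad ℝ (slLie n) m) := by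
  refine ⟨(av ν ν' i - av ν ν' j)⁻¹ • cL ν i j, ?_⟩
  rw [LinearMap.map_smul, ad_cL ν ν' m hm, smul_smul, inv_mul_cancel₀ h, one_smul]

lemma lie_cL (i j : Fin n) (hi : i ≠ ν) (hj : j ≠ ν) :
    ⁅cL ν i ν, cL ν ν j⁆ = cL ν i j := by
  apply Subtype.ext
  rw [LieSubalgebra.coe_bracket]
  show ⁅cE ν i ν, cE ν ν j⁆ = cE ν i j
  have h1 : cE ν i ν = single i ν 1 := by simp [cE, hi]
  have h2 : cE ν ν j = single ν j 1 := by simp [cE, Ne.symm hj]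
  rw [Ring.lie_def, h1, h2, single_mul_single_same]
  rcases eq_or_ne j i with rfl | hji
  · rw [single_mul_single_same]
    simp [cE]
  · rw [single_mul_single_of_ne 1 ν j i hji 1, sub_zero, one_mul]
    have hij : i ≠ j := Ne.symm hji
    simp [cE, hij]

lemma av_self : av ν ν' ν = 1 := by simp [av]

lemma av_ne_one (i : Fin n) (hi : i ≠ ν) : av ν ν' i ≠ 1 := by
  simp only [av, if_neg hi]
  split_ifs <;> norm_num

lemma cL_mem (hm : (m : Matrix (Fin n) (Fin n) ℝ) = diagonal (av ν ν')) (i j : Fin n) :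
    cL ν i j ∈ Submodule.span ℝ {m} ⊔ LinearMap.range (LieAlgebra.ad ℝ (slLie n) m) ⊔
      bracketSpan (LinearMap.range (LieAlgebra.ad ℝ (slLie n) m))
        (LinearMap.range (LieAlgebra.ad ℝ (slLie n) m)) := by
  by_cases hi : i = ν
  · by_cases hj : j = ν
    · -- `cL ν ν ν = 0`
      have : cL ν i j = 0 := by
        apply Subtype.ext
        show cE ν i j = 0
        rw [hi, hj]
        simp [cE]
      rw [this]; exact Submodule.zero_mem _
    · -- `i = ν`, `j ≠ ν` : eigenvalue `1 - av j ≠ 0`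
      refine Submodule.mem_sup_left (Submodule.mem_sup_right ?_)
      apply cL_mem_range ν ν' m hm
      rw [hi, av_self]
      intro h
      exact av_ne_one ν ν' j hj (by linarith)
  · by_cases hj : j = ν
    · -- `j = ν`, `i ≠ ν` : eigenvalue `av i - 1 ≠ 0`
      refine Submodule.mem_sup_left (Submodule.mem_sup_right ?_)
      apply cL_mem_range ν ν' m hm
      rw [hj, av_self]
      intro h
      exact av_ne_one ν ν' i hi (by linarith)
    · -- both differ from ν : use the bracket
      refine Submodule.mem_sup_right ?_
      apply Submodule.subset_span
      refine ⟨cL ν i ν, ?_, cL ν ν j, ?_, (lie_cL ν i j hi hj).symm⟩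
      · apply cL_mem_range ν ν' m hm
        rw [av_self]
        intro h
        exact av_ne_one ν ν' i hi (by linarith)
      · apply cL_mem_range ν ν' m hm
        rw [av_self]
        intro h
        exact av_ne_one ν ν' j hj (by linarith)

lemma decomp (x : slLie n) :
    x = ∑ i : Fin n, ∑ j : Fin n, ((x : Matrix (Fin n) (Fin n) ℝ) i j) • cL ν i j := by
  apply Subtype.ext
  push_cast [AddSubmonoidClass.coe_finset_sum]
  show (x : Matrix (Fin n) (Fin n) ℝ) =
    ∑ i : Fin n, ∑ j : Fin n, ((x : Matrix (Fin n) (Fin n) ℝ) i j) • cE ν i j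
  have expand : ∀ i j : Fin n, ((x : Matrix (Fin n) (Fin n) ℝ) i j) • cE ν i j =
      single i j ((x : Matrix (Fin n) (Fin n) ℝ) i j) -
        (if i = j then ((x : Matrix (Fin n) (Fin n) ℝ) i j) • single ν ν (1:ℝ)
          else 0) := by
    intro i j
    rw [cE, smul_sub, smul_single, smul_eq_mul, mul_one]
    congr 1
    split_ifs <;> simp
  simp only [expand, Finset.sum_sub_distrib]
  rw [← matrix_eq_sum_single]
  have inner : ∀ i : Fin n, (∑ j : Fin n,
      (if i = j then ((x : Matrix (Fin n) (Fin n) ℝ) i j) • single ν ν (1:ℝ)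
        else 0)) = ((x : Matrix (Fin n) (Fin n) ℝ) i i) • single ν ν (1:ℝ) := by
    intro i
    rw [Finset.sum_ite_eq]
    simp
  simp only [inner, ← Finset.sum_smul]
  have : (∑ i : Fin n, (x : Matrix (Fin n) (Fin n) ℝ) i i) = 0 := x.2
  rw [this, zero_smul, sub_zero]

end SlEssAux

/-- In `sl(n,ℝ)`, for `1 ≤ ν ≤ n-1`, the element `e_ν = E(ν,ν) − E(ν+1,ν+1)` is
essential. -/
theorem sl_essential (n : ℕ) (hn : 2 ≤ n) (ν : Fin n) (hν : (ν : ℕ) + 1 < n) :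
    Essential (⟨single ν ν (1 : ℝ) -
        single (⟨(ν : ℕ) + 1, hν⟩ : Fin n) (⟨(ν : ℕ) + 1, hν⟩ : Fin n) (1 : ℝ),
      by
        show Matrix.trace _ = 0
        rw [trace_sub, trace_single_eq_same, trace_single_eq_same, sub_self]⟩ :
      slLie n) := by
  set ν' : Fin n := ⟨(ν : ℕ) + 1, hν⟩ with hν'
  have hne : ν ≠ ν' := by
    intro h
    have : (ν : ℕ) = (ν : ℕ) + 1 := congrArg Fin.val h
    omega
  set m : slLie n := (⟨single ν ν (1 : ℝ) -
      single ν' ν' (1 : ℝ), by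
        show Matrix.trace _ = 0
        rw [trace_sub, trace_single_eq_same, trace_single_eq_same, sub_self]⟩ :
      slLie n) with hmdef
  have hm : (m : Matrix (Fin n) (Fin n) ℝ) = diagonal (SlEssAux.av ν ν') :=
    SlEssAux.m_eq_diagonal ν ν' hne
  constructor
  · rw [eq_top_iff]
    rintro x -
    rw [SlEssAux.decomp ν x]
    refine Submodule.sum_mem _ fun i _ => Submodule.sum_mem _ fun j _ =>
      Submodule.smul_mem _ _ ?_
    refine le_iSup (fun c => (LieAlgebra.ad ℝ (slLie n) m).eigenspace c)
      (SlEssAux.av ν ν' i - SlEssAux.av ν ν' j) ?_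
    rw [Module.End.mem_eigenspace_iff]
    exact SlEssAux.ad_cL ν ν' m hm i j
  · rw [eq_top_iff]
    rintro x -
    rw [SlEssAux.decomp ν x]
    exact Submodule.sum_mem _ fun i _ => Submodule.sum_mem _ fun j _ =>
      Submodule.smul_mem _ _ (SlEssAux.cL_mem ν ν' m hm i j)
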